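/- Let R = S × T be a direct product of rings. If R is a right C4*-ring, then both S and T are right C4*-rings. -/

import Mathlib

open MulOpposite

section C4Defs

/-- A submodule is a direct summand if it has a complement. -/
def IsDirectSummand {R M : Type*} [Ring R] [AddCommGroup M] [Module R M]
    (A : Submodule R M) : Prop :=
  ∃ B : Submodule R M, IsCompl A B

/-- `M` is a `C4`-module over `R`: for every internal direct sum decomposition `M = A ⊕ B`
and every homomorphism `f : A → B` whose kernel is a direct summand of `A`, the image of `f`
is a direct summand of `B`. -/
def IsC4Module (R M : Type*) [Ring R] [AddCommGroup M] [Module R M] : Prop :=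
  ∀ A B : Submodule R M, IsCompl A B → ∀ f : A →ₗ[R] B,
    IsDirectSummand (LinearMap.ker f) → IsDirectSummand (LinearMap.range f)

/-- `M` is a `C4*`-module: every submodule of `M` is a `C4`-module. -/
def IsC4StarModule (R M : Type*) [Ring R] [AddCommGroup M] [Module R M] : Prop :=
  ∀ N : Submodule R M, IsC4Module R N

/-- `M` is square-free: no nonzero submodules `A`, `B` with `A ⊓ B = ⊥` and `A ≅ B`. -/
def IsSquareFreeModule (R M : Type*) [Ring R] [AddCommGroup M] [Module R M] : Prop :=
  ∀ A B : Submodule R M, A ≠ ⊥ → B ≠ ⊥ → A ⊓ B = ⊥ → IsEmpty (A ≃ₗ[R] B)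

/-- `M` is summand-square-free: no nonzero direct summands `A`, `B` with `A ⊓ B = ⊥`
and `A ≅ B`. -/
def IsSummandSquareFree (R M : Type*) [Ring R] [AddCommGroup M] [Module R M] : Prop :=
  ∀ A B : Submodule R M, IsDirectSummand A → IsDirectSummand B →
    A ≠ ⊥ → B ≠ ⊥ → A ⊓ B = ⊥ → IsEmpty (A ≃ₗ[R] B)

/-- `X` is an essential submodule of `A`. -/
def IsEssentialIn {R M : Type*} [Ring R] [AddCommGroup M] [Module R M]
    (X A : Submodule R M) : Prop :=
  X ≤ A ∧ ∀ N : Submodule R M, N ≤ A → N ≠ ⊥ → X ⊓ N ≠ ⊥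

/-- A triple `(X, Y, f)` where `X`, `Y` are semisimple direct summands of `M` with
`X ⊓ Y = ⊥` and `f : X ≅ Y` an isomorphism.  These are the elements of the poset `S(M)`
from the definition of semi-weak-CS modules. -/
structure SWTriple (R M : Type*) [Ring R] [AddCommGroup M] [Module R M] where
  X : Submodule R M
  Y : Submodule R M
  semisimpleX : IsSemisimpleModule R X
  semisimpleY : IsSemisimpleModule R Y
  summandX : IsDirectSummand X
  summandY : IsDirectSummand Y
  disj : X ⊓ Y = ⊥
  f : X ≃ₗ[R] Y

/-- The extension order on the poset `S(M)` of triples: `(X₁,Y₁,f₁) ≤ (X₂,Y₂,f₂)` iff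
`X₁ ≤ X₂`, `Y₁ ≤ Y₂` and `f₂` restricts to `f₁` on `X₁`. -/
def SWTriple.Extends {R M : Type*} [Ring R] [AddCommGroup M] [Module R M]
    (t s : SWTriple R M) : Prop :=
  ∃ hX : t.X ≤ s.X, t.Y ≤ s.Y ∧
    ∀ x : t.X, (s.f ⟨x.1, hX x.2⟩ : M) = (t.f x : M)

/-- `M` is semi-weak-CS: for every chain in the poset `S(M)`, with `X` the union of the first
components and `Y` the union of the second components, there are direct summands `A`, `B`
of `M` with `X` essential in `A` and `Y` essential in `B`. -/
def IsSemiWeakCS (R M : Type*) [Ring R] [AddCommGroup M] [Module R M] : Prop :=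
  ∀ C : Set (SWTriple R M), IsChain SWTriple.Extends C →
    ∃ A B : Submodule R M, IsDirectSummand A ∧ IsDirectSummand B ∧
      IsEssentialIn (⨆ t ∈ C, t.X) A ∧ IsEssentialIn (⨆ t ∈ C, t.Y) B

/-- `M` is strongly `C4*` if it is both semi-weak-CS and `C4*`. -/
def IsStronglyC4StarModule (R M : Type*) [Ring R] [AddCommGroup M] [Module R M] : Prop :=
  IsSemiWeakCS R M ∧ IsC4StarModule R M

/-- `R` is a right `C4*`-ring: the right regular module `R_R` (i.e. `R` as a module over
`Rᵐᵒᵖ`) is a `C4*`-module. -/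
def IsRightC4StarRing (R : Type*) [Ring R] : Prop := IsC4StarModule Rᵐᵒᵖ R

/-- `R` is a left `C4*`-ring: the left regular module `_RR` is a `C4*`-module. -/
def IsLeftC4StarRing (R : Type*) [Ring R] : Prop := IsC4StarModule R R

/-- `R` is a strongly right `C4*`-ring. -/
def IsStronglyRightC4StarRing (R : Type*) [Ring R] : Prop := IsStronglyC4StarModule Rᵐᵒᵖ R

/-- `R` is a strongly left `C4*`-ring. -/
def IsStronglyLeftC4StarRing (R : Type*) [Ring R] : Prop := IsStronglyC4StarModule R R

/-- `R` is right semi-weak-CS. -/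
def IsRightSemiWeakCSRing (R : Type*) [Ring R] : Prop := IsSemiWeakCS Rᵐᵒᵖ R

/-- `R` is left semi-weak-CS. -/
def IsLeftSemiWeakCSRing (R : Type*) [Ring R] : Prop := IsSemiWeakCS R R

/-- The left square-free transfer condition `LSF`: if the right regular module `T_T` is
summand-square-free then the left regular module `_TT` is square-free. -/
def LSF (T : Type*) [Ring T] : Prop :=
  IsSummandSquareFree Tᵐᵒᵖ T → IsSquareFreeModule T T

end C4Defs

section Corner

variable {T : Type*} [Ring T]

/-- The corner `eTe = {x : T | e * x = x ∧ x * e = x}` as a non-unital subring. -/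
def cornerSubring (e : T) : NonUnitalSubring T where
  carrier := {x : T | e * x = x ∧ x * e = x}
  add_mem' := by
    rintro a b ⟨ha1, ha2⟩ ⟨hb1, hb2⟩
    exact ⟨by rw [mul_add, ha1, hb1], by rw [add_mul, ha2, hb2]⟩
  zero_mem' := ⟨mul_zero e, zero_mul e⟩
  neg_mem' := by
    rintro a ⟨ha1, ha2⟩
    exact ⟨by rw [mul_neg, ha1], by rw [neg_mul, ha2]⟩
  mul_mem' := by
    rintro a b ⟨ha1, ha2⟩ ⟨hb1, hb2⟩
    exact ⟨by rw [← mul_assoc, ha1], by rw [mul_assoc, hb2]⟩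

theorem mem_cornerSubring {e x : T} :
    x ∈ cornerSubring e ↔ e * x = x ∧ x * e = x := Iff.rfl

/-- The corner ring `eTe` associated to an idempotent `e` of `T`; its identity is `e`. -/
def Corner (e : T) (he : IsIdempotentElem e) : Type _ := ↥(cornerSubring e)

instance {e : T} {he : IsIdempotentElem e} : Ring (Corner e he) :=
  { (inferInstance : NonUnitalRing ↥(cornerSubring e)) with
    one := ⟨e, he, he⟩
    one_mul := fun x => Subtype.ext (mem_cornerSubring.mp x.2).1
    mul_one := fun x => Subtype.ext (mem_cornerSubring.mp x.2).2 }

/-- `eT = {x : T | e * x = x}` as an additive subgroup; it is a left module over the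
corner ring `eTe`. -/
def leftPart (e : T) : AddSubgroup T where
  carrier := {x : T | e * x = x}
  add_mem' := by
    intro a b ha hb
    simp only [Set.mem_setOf_eq] at *
    rw [mul_add, ha, hb]
  zero_mem' := mul_zero e
  neg_mem' := by
    intro a ha
    simp only [Set.mem_setOf_eq] at *
    rw [mul_neg, ha]

/-- `Te = {x : T | x * e = x}` as an additive subgroup; it is a right module over the
corner ring `eTe`. -/
def rightPart (e : T) : AddSubgroup T where
  carrier := {x : T | x * e = x}
  add_mem' := by
    intro a b ha hb
    simp only [Set.mem_setOf_eq] at *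
    rw [add_mul, ha, hb]
  zero_mem' := zero_mul e
  neg_mem' := by
    intro a ha
    simp only [Set.mem_setOf_eq] at *
    rw [neg_mul, ha]

theorem mem_leftPart {e x : T} : x ∈ leftPart e ↔ e * x = x := Iff.rfl

theorem mem_rightPart {e x : T} : x ∈ rightPart e ↔ x * e = x := Iff.rfl

/-- `eT` is a (unital) left module over the corner ring `eTe`. -/
instance {e : T} {he : IsIdempotentElem e} : Module (Corner e he) ↥(leftPart e) where
  smul c x := ⟨c.1 * x.1, by
    have h1 : e * c.1 = c.1 := (mem_cornerSubring.mp c.2).1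
    show e * (c.1 * x.1) = c.1 * x.1
    rw [← mul_assoc, h1]⟩
  one_smul x := Subtype.ext (by
    show e * x.1 = x.1
    exact mem_leftPart.mp x.2)
  mul_smul a b x := Subtype.ext (by
    show (a.1 * b.1) * x.1 = a.1 * (b.1 * x.1)
    rw [mul_assoc])
  smul_zero a := Subtype.ext (by
    show a.1 * 0 = 0
    exact mul_zero _)
  smul_add a x y := Subtype.ext (by
    show a.1 * (x.1 + y.1) = a.1 * x.1 + a.1 * y.1
    exact mul_add _ _ _)
  add_smul a b x := Subtype.ext (by
    show (a.1 + b.1) * x.1 = a.1 * x.1 + b.1 * x.1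
    exact add_mul _ _ _)
  zero_smul x := Subtype.ext (by
    show (0 : T) * x.1 = 0
    exact zero_mul _)

/-- `Te` is a (unital) right module over the corner ring `eTe`, i.e. a module over
`(eTe)ᵐᵒᵖ`. -/
instance {e : T} {he : IsIdempotentElem e} : Module (Corner e he)ᵐᵒᵖ ↥(rightPart e) where
  smul c x := ⟨x.1 * (unop c).1, by
    have h2 : (unop c).1 * e = (unop c).1 := (mem_cornerSubring.mp (unop c).2).2
    show (x.1 * (unop c).1) * e = x.1 * (unop c).1
    rw [mul_assoc, h2]⟩
  one_smul x := Subtype.ext (by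
    show x.1 * e = x.1
    exact mem_rightPart.mp x.2)
  mul_smul a b x := Subtype.ext (by
    show x.1 * ((unop b).1 * (unop a).1) = (x.1 * (unop b).1) * (unop a).1
    rw [mul_assoc])
  smul_zero a := Subtype.ext (by
    show (0 : T) * (unop a).1 = 0
    exact zero_mul _)
  smul_add a x y := Subtype.ext (by
    show (x.1 + y.1) * (unop a).1 = x.1 * (unop a).1 + y.1 * (unop a).1
    exact add_mul _ _ _)
  add_smul a b x := Subtype.ext (by
    show x.1 * ((unop a).1 + (unop b).1) = x.1 * (unop a).1 + x.1 * (unop b).1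
    exact mul_add _ _ _)
  zero_smul x := Subtype.ext (by
    show x.1 * (0 : T) = 0
    exact mul_zero _)

/-- The hereditary side-transfer condition `HST`: for every idempotent `e` of `T`, if the
module `eT`/`Te` is summand-square-free as a right `eTe`-module (formalized on the carrier
`Te = rightPart e`, which carries the unital right `eTe`-action; at `e = 1` this is the right
regular module `T_T`), then the left `eTe`-module (carrier `eT = leftPart e`, carrying the
unital left `eTe`-action; at `e = 1` this is the left regular module `_TT`) is square-free. -/
def HST (T : Type*) [Ring T] : Prop :=
  ∀ (e : T) (he : IsIdempotentElem e),
    IsSummandSquareFree (Corner e he)ᵐᵒᵖ ↥(rightPart e) →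
      IsSquareFreeModule (Corner e he) ↥(leftPart e)

/-- The corner-stability axiom `CSA`: for every idempotent `e` of `T`, the left regular
module of the corner ring `eTe` is semi-weak-CS. -/
def CSA' (T : Type*) [Ring T] : Prop :=
  ∀ (e : T) (he : IsIdempotentElem e),
    IsSemiWeakCS (Corner e he) (Corner e he)

end Corner

section SymmetryDatum

/-- A right-to-left symmetry datum on `R`: a ring decomposition `R ≅ S × T` where `S` is
semisimple artinian, the right regular module `T_T` is summand-square-free, the two ideals
`S`, `T` are orthogonal as right `R`-modules (no nonzero isomorphic right `R`-submodules),
and `T` satisfies `HST` and `CSA`. -/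
structure RightToLeftSymmetryDatum (R S T : Type*) [Ring R] [Ring S] [Ring T] where
  iso : R ≃+* S × T
  semisimpleArtinian : IsSemisimpleRing S
  ssf : IsSummandSquareFree Tᵐᵒᵖ T
  orthogonal : ∀ A B : Submodule Rᵐᵒᵖ R,
    (∀ a ∈ A, (iso a).2 = 0) → (∀ b ∈ B, (iso b).1 = 0) →
    A ≠ ⊥ → B ≠ ⊥ → IsEmpty (A ≃ₗ[Rᵐᵒᵖ] B)
  hst : HST T
  csa : CSA' T

end SymmetryDatum

section Beta

variable (R : Type*) [Ring R]

/-- The right annihilator `r_R(P) = {s : R | P s = 0}` of a right submodule `P` of `R`. -/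
def rightAnnSet (P : Submodule Rᵐᵒᵖ R) : Set R := {s : R | ∀ p ∈ P, p * s = 0}

/-- The annihilator-bidual `β_r(P) = ℓ_R(r_R(P))`, as a right ideal of `R`. -/
def betaR (P : Submodule Rᵐᵒᵖ R) : Submodule Rᵐᵒᵖ R where
  carrier := {r : R | ∀ s ∈ rightAnnSet R P, r * s = 0}
  add_mem' := by
    intro a b ha hb
    intro s hs
    rw [add_mul, ha s hs, hb s hs, add_zero]
  zero_mem' := by
    intro s hs
    exact zero_mul s
  smul_mem' := by
    intro c x hx s hs
    show (x * unop c) * s = 0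
    rw [mul_assoc]
    refine hx _ ?_
    intro p hp
    rw [← mul_assoc]
    exact hs (p * unop c) (Submodule.smul_mem P c hp)

/-- A right ideal is a two-sided ideal which is a ring direct summand of `R` iff it is of
the form `cR` for a central idempotent `c`. -/
def IsRingDirectSummandIdeal {R : Type*} [Ring R] (I : Submodule Rᵐᵒᵖ R) : Prop :=
  ∃ c : R, IsIdempotentElem c ∧ (∀ r : R, c * r = r * c) ∧ (∀ x : R, x ∈ I ↔ c * x = x)

/-- `R` has right semisimple annihilator asymmetry. -/
def HasRightSemisimpleAnnihilatorAsymmetry (R : Type*) [Ring R] : Prop :=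
  ∃ P : Submodule Rᵐᵒᵖ R, IsSemisimpleModule Rᵐᵒᵖ P ∧ IsDirectSummand P ∧
    (¬ IsSemisimpleModule Rᵐᵒᵖ (betaR R P) ∨
     (IsSemisimpleModule Rᵐᵒᵖ (betaR R P) ∧ ¬ IsRingDirectSummandIdeal (betaR R P)) ∨
     ¬ IsEssentialIn P (betaR R P))

end Beta

section Transfer

variable {R R' M M' : Type*} [Ring R] [Ring R'] [AddCommGroup M] [Module R M]
  [AddCommGroup M'] [Module R' M']
variable (π : R' →+* R) (φ : M ≃+ M')
variable (hc : ∀ (r' : R') (m : M), φ (π r' • m) = r' • φ m)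

def smap (A : Submodule R M) : Submodule R' M' where
  carrier := φ '' A
  add_mem' := by
    rintro _ _ ⟨a, ha, rfl⟩ ⟨b, hb, rfl⟩
    exact ⟨a + b, A.add_mem ha hb, map_add φ a b⟩
  zero_mem' := ⟨0, A.zero_mem, map_zero φ⟩
  smul_mem' := by
    rintro c _ ⟨a, ha, rfl⟩
    exact ⟨π c • a, A.smul_mem _ ha, hc c a⟩

lemma mem_smap {A : Submodule R M} {y : M'} : y ∈ smap π φ hc A ↔ φ.symm y ∈ A := by
  constructor
  · rintro ⟨a, ha, rfl⟩; simpa using ha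
  · intro h; exact ⟨φ.symm y, h, φ.apply_symm_apply y⟩

def tmap (hπ : Function.Surjective π) (A' : Submodule R' M') : Submodule R M where
  carrier := φ ⁻¹' A'
  add_mem' := by
    intro a b ha hb
    simp only [Set.mem_preimage, map_add] at *
    exact A'.add_mem ha hb
  zero_mem' := by simp only [Set.mem_preimage, map_zero]; exact A'.zero_mem
  smul_mem' := by
    intro c x hx
    obtain ⟨c', rfl⟩ := hπ c
    simp only [Set.mem_preimage] at *
    rw [hc]
    exact A'.smul_mem _ hx

def smapIso (hπ : Function.Surjective π) : Submodule R M ≃o Submodule R' M' where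
  toFun := smap π φ hc
  invFun := tmap π φ hc hπ
  left_inv A := by
    ext x
    show x ∈ φ ⁻¹' (smap π φ hc A) ↔ _
    simp [mem_smap]
  right_inv A' := by
    ext y
    rw [mem_smap]
    show φ (φ.symm y) ∈ A' ↔ y ∈ A'
    rw [φ.apply_symm_apply]
  map_rel_iff' {A B} := by
    constructor
    · intro hle a ha
      have : φ a ∈ smap π φ hc B := hle ⟨a, ha, rfl⟩
      rw [mem_smap] at this
      simpa using this
    · rintro hle _ ⟨a, ha, rfl⟩
      exact ⟨a, hle ha, rfl⟩

lemma isDirectSummand_smap_iff (hπ : Function.Surjective π) {A : Submodule R M} :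
    IsDirectSummand (smap π φ hc A) ↔ IsDirectSummand A := by
  constructor
  · rintro ⟨B', hB'⟩
    refine ⟨tmap π φ hc hπ B', ?_⟩
    have h2 := (smapIso π φ hc hπ).symm.isCompl_iff.mp hB'
    rwa [show (smapIso π φ hc hπ).symm (smap π φ hc A) = A from
      (smapIso π φ hc hπ).symm_apply_apply A] at h2
  · rintro ⟨B, hB⟩
    exact ⟨smap π φ hc B, (smapIso π φ hc hπ).isCompl_iff.mp hB⟩

def subEquiv (A : Submodule R M) : ↥A ≃+ ↥(smap π φ hc A) where
  toFun x := ⟨φ x.1, ⟨x.1, x.2, rfl⟩⟩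
  invFun y := ⟨φ.symm y.1, (mem_smap π φ hc).mp y.2⟩
  left_inv x := Subtype.ext (φ.symm_apply_apply x.1)
  right_inv y := Subtype.ext (φ.apply_symm_apply y.1)
  map_add' x y := Subtype.ext (map_add φ x.1 y.1)

lemma subEquiv_compat (A : Submodule R M) (r' : R') (x : ↥A) :
    subEquiv π φ hc A (π r' • x) = r' • subEquiv π φ hc A x :=
  Subtype.ext (hc r' x.1)

include hc in
theorem isC4Module_transfer (hπ : Function.Surjective π) (h : IsC4Module R' M') : IsC4Module R M := by
  intro A B hAB f hker
  set A' := smap π φ hc A with hA'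
  set B' := smap π φ hc B with hB'
  have hAB' : IsCompl A' B' := (smapIso π φ hc hπ).isCompl_iff.mp hAB
  let eA := subEquiv π φ hc A
  let eB := subEquiv π φ hc B
  have eA_symm_compat : ∀ (r' : R') (y : ↥A'), eA.symm (r' • y) = π r' • eA.symm y := by
    intro r' y
    apply eA.injective
    rw [eA.apply_symm_apply, subEquiv_compat, eA.apply_symm_apply]
  let f' : A' →ₗ[R'] B' :=
    { toFun := fun x => eB (f (eA.symm x))
      map_add' := by intro x y; simp [map_add]
      map_smul' := by
        intro r' x
        simp only [RingHom.id_apply]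
        rw [eA_symm_compat, map_smul, subEquiv_compat] }
  have hkerEq : LinearMap.ker f' =
      smap π eA (subEquiv_compat π φ hc A) (LinearMap.ker f) := by
    ext y
    rw [mem_smap]
    simp only [LinearMap.mem_ker]
    constructor
    · intro hy
      have : eB (f (eA.symm y)) = 0 := hy
      simpa using this
    · intro hy
      show eB (f (eA.symm y)) = 0
      rw [hy, map_zero]
  have hrangeEq : LinearMap.range f' =
      smap π eB (subEquiv_compat π φ hc B) (LinearMap.range f) := by
    ext y
    rw [mem_smap]
    simp only [LinearMap.mem_range]
    constructor
    · rintro ⟨x, hx⟩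
      refine ⟨eA.symm x, ?_⟩
      have : eB (f (eA.symm x)) = y := hx
      apply eB.injective
      rw [this, eB.apply_symm_apply]
    · rintro ⟨x, hx⟩
      exact ⟨eA x, by show eB (f (eA.symm (eA x))) = y; rw [eA.symm_apply_apply, hx,
        eB.apply_symm_apply]⟩
  have hker' : IsDirectSummand (LinearMap.ker f') := by
    rw [hkerEq]
    exact (isDirectSummand_smap_iff π eA (subEquiv_compat π φ hc A) hπ).mpr hker
  have := h A' B' hAB' f' hker'
  rw [hrangeEq] at this
  exact (isDirectSummand_smap_iff π eB (subEquiv_compat π φ hc B) hπ).mp this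

end Transfer

/-- If the direct product `R = S × T` is a right `C4*`-ring, then both `S` and
`T` are right `C4*`-rings. -/
theorem right_factor_inheritance_c4star {S T : Type*} [Ring S] [Ring T]
    (h : IsRightC4StarRing (S × T)) :
    IsRightC4StarRing S ∧ IsRightC4StarRing T := by
  constructor
  · intro N
    let π : (S × T)ᵐᵒᵖ →+* Sᵐᵒᵖ := RingHom.op (RingHom.fst S T)
    have hπ : Function.Surjective π := fun y => ⟨op (unop y, 0), rfl⟩
    let N' : Submodule (S × T)ᵐᵒᵖ (S × T) :=
      { carrier := {x | x.1 ∈ N ∧ x.2 = 0}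
        add_mem' := by
          rintro a b ⟨ha1, ha2⟩ ⟨hb1, hb2⟩
          exact ⟨N.add_mem ha1 hb1, by simp [ha2, hb2]⟩
        zero_mem' := ⟨N.zero_mem, rfl⟩
        smul_mem' := by
          rintro c x ⟨h1, h2⟩
          refine ⟨?_, ?_⟩
          · show (x * unop c).1 ∈ N
            exact N.smul_mem (op (unop c).1) h1
          · show (x * unop c).2 = 0
            show x.2 * (unop c).2 = 0
            rw [h2, zero_mul] }
    let φN : ↥N ≃+ ↥N' :=
      { toFun := fun n => ⟨(n.1, 0), n.2, rfl⟩
        invFun := fun x => ⟨x.1.1, x.2.1⟩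
        left_inv := fun n => Subtype.ext rfl
        right_inv := fun x => Subtype.ext (Prod.ext rfl x.2.2.symm)
        map_add' := fun a b => Subtype.ext (Prod.ext rfl (zero_add 0).symm) }
    have compatN : ∀ (r' : (S × T)ᵐᵒᵖ) (n : ↥N), φN (π r' • n) = r' • φN n := by
      intro r' n
      apply Subtype.ext
      show ((n.1 * (unop r').1 : S), (0 : T)) = (n.1, (0 : T)) * unop r'
      exact Prod.ext rfl (zero_mul _).symm
    exact isC4Module_transfer π φN compatN hπ (h N')
  · intro N
    let π : (S × T)ᵐᵒᵖ →+* Tᵐᵒᵖ := RingHom.op (RingHom.snd S T)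
    have hπ : Function.Surjective π := fun y => ⟨op (0, unop y), rfl⟩
    let N' : Submodule (S × T)ᵐᵒᵖ (S × T) :=
      { carrier := {x | x.2 ∈ N ∧ x.1 = 0}
        add_mem' := by
          rintro a b ⟨ha1, ha2⟩ ⟨hb1, hb2⟩
          exact ⟨N.add_mem ha1 hb1, by simp [ha2, hb2]⟩
        zero_mem' := ⟨N.zero_mem, rfl⟩
        smul_mem' := by
          rintro c x ⟨h1, h2⟩
          refine ⟨?_, ?_⟩
          · show (x * unop c).2 ∈ N
            exact N.smul_mem (op (unop c).2) h1
          · show (x * unop c).1 = 0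
            show x.1 * (unop c).1 = 0
            rw [h2, zero_mul] }
    let φN : ↥N ≃+ ↥N' :=
      { toFun := fun n => ⟨(0, n.1), n.2, rfl⟩
        invFun := fun x => ⟨x.1.2, x.2.1⟩
        left_inv := fun n => Subtype.ext rfl
        right_inv := fun x => Subtype.ext (Prod.ext x.2.2.symm rfl)
        map_add' := fun a b => Subtype.ext (Prod.ext (zero_add 0).symm rfl) }
    have compatN : ∀ (r' : (S × T)ᵐᵒᵖ) (n : ↥N), φN (π r' • n) = r' • φN n := by
      intro r' n
      apply Subtype.ext
      show ((0 : S), (n.1 * (unop r').2 : T)) = ((0 : S), n.1) * unop r'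
      exact Prod.ext (zero_mul _).symm rfl
    exact isC4Module_transfer π φN compatN hπ (h N')
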